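/- Let N be a binary reticulation-visible network, B ⊆ L(N), and C a lowest big tree node component of N. (i) If ℓ is a leaf of N lying in C with ℓ ∉ B, then for every node u on the directed path in C from ρ(C) to ℓ, B is not a soft cluster of u in N. (ii) For every r ∈ IR(C) with c(r) ∉ B, and for every node u on the directed path in C from ρ(C) to lca_C(p(r)) (both endpoints included), B is not a soft cluster of u in N, where lca_C(p(r)) denotes the lowest common ancestor in the tree C of the parents of r. -/

import Mathlib

/-!
Framework for rooted phylogenetic networks, formalized as directed graphs
given by an adjacency relation `A : V → V → Prop` on a vertex type `V`,
with a distinguished root `ρ`.  Leaves are identified with their (unique)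
labels, i.e. the labelling is the identity on leaf vertices.
-/

namespace PhyloNet

variable {V : Type} {W : Type}

/-- Indegree of a vertex. -/
noncomputable def inDeg (A : V → V → Prop) (v : V) : ℕ := {u | A u v}.ncard

/-- Outdegree of a vertex. -/
noncomputable def outDeg (A : V → V → Prop) (v : V) : ℕ := {w | A v w}.ncard

/-- `p` is a directed path (walk) from `u` to `v`, given as the list of its vertices. -/
def IsPath (A : V → V → Prop) (u v : V) (p : List V) : Prop :=
  p.Chain' A ∧ p.head? = some u ∧ p.getLast? = some v

/-- `A` with root `ρ` is a phylogenetic network: a finite rooted acyclic digraph whose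
root has indegree 0 and outdegree ≥ 2, from which every node is reachable, and in which
every non-root node is either a leaf (indegree 1, outdegree 0), an internal tree node
(indegree 1, outdegree ≥ 2) or a reticulation (indegree ≥ 2, outdegree 1). -/
structure IsNetwork (A : V → V → Prop) (ρ : V) : Prop where
  finite : Finite V
  acyclic : ∀ v, ¬ Relation.TransGen A v v
  root_indeg : inDeg A ρ = 0
  root_outdeg : 2 ≤ outDeg A ρ
  reach_from_root : ∀ v, Relation.ReflTransGen A ρ v
  degree_cond : ∀ v, v ≠ ρ →
    (inDeg A v = 1 ∧ (outDeg A v = 0 ∨ 2 ≤ outDeg A v)) ∨ (2 ≤ inDeg A v ∧ outDeg A v = 1)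

/-- Reticulation node: indegree ≥ 2 and outdegree 1. -/
def IsRet (A : V → V → Prop) (v : V) : Prop := 2 ≤ inDeg A v ∧ outDeg A v = 1

/-- Leaf: indegree 1 and outdegree 0. -/
def IsLeaf (A : V → V → Prop) (v : V) : Prop := inDeg A v = 1 ∧ outDeg A v = 0

/-- Tree node: any node that is not a reticulation node. -/
def IsTreeNode (A : V → V → Prop) (v : V) : Prop := ¬ IsRet A v

/-- `u` is visible on `v`: every directed path from the root `ρ` to `v` contains `u`. -/
def Visible (A : V → V → Prop) (ρ u v : V) : Prop := ∀ p, IsPath A ρ v p → u ∈ p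

/-- A network is reticulation-visible if every reticulation node is visible on some leaf. -/
def RetVisible (A : V → V → Prop) (ρ : V) : Prop :=
  ∀ r, IsRet A r → ∃ ℓ, IsLeaf A ℓ ∧ Visible A ρ r ℓ

/-- Undirected adjacency in the subgraph `N − R(N)` induced on tree nodes. -/
def TAdj (A : V → V → Prop) (u v : V) : Prop :=
  IsTreeNode A u ∧ IsTreeNode A v ∧ (A u v ∨ A v u)

/-- `S` is a tree node component: a connected component (ignoring directions) of the
subgraph induced on the tree nodes. -/
def IsTNC (A : V → V → Prop) (S : Set V) : Prop :=
  ∃ u, IsTreeNode A u ∧ S = {v | Relation.ReflTransGen (TAdj A) u v}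

/-- `r` is the root of the tree node component `S`: it lies in `S` and has indegree 0
within `N − R(N)`, i.e. it has no tree-node parent. -/
def CompRoot (A : V → V → Prop) (S : Set V) (r : V) : Prop :=
  r ∈ S ∧ ∀ u, IsTreeNode A u → ¬ A u r

/-- Tree node component `C'` is below tree node component `C''`. -/
def Below (A : V → V → Prop) (C' C'' : Set V) : Prop :=
  ∃ r, IsRet A r ∧ (∃ c, A r c ∧ CompRoot A C' c) ∧ (∃ p ∈ C'', A p r)

/-- A big tree node component: a tree node component with at least two nodes. -/
def BigTNC (A : V → V → Prop) (C : Set V) : Prop :=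
  IsTNC A C ∧ ∃ a ∈ C, ∃ b ∈ C, a ≠ b

/-- A single-leaf component: its node set is `{ℓ}` for some leaf `ℓ`. -/
def SingleLeafTNC (A : V → V → Prop) (C : Set V) : Prop :=
  ∃ ℓ, IsLeaf A ℓ ∧ C = {ℓ}

/-- A lowest big tree node component: a big tree node component `C` such that every
tree node component whose root is a proper descendant of the root of `C` is a
single-leaf component. -/
def LowestBig (A : V → V → Prop) (C : Set V) : Prop :=
  BigTNC A C ∧ ∀ C' r' rC, IsTNC A C' → CompRoot A C' r' → CompRoot A C rC →
    Relation.TransGen A rC r' → SingleLeafTNC A C'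

/-- An inner reticulation: all of its parents lie in one and the same tree node component. -/
def InnerRet (A : V → V → Prop) (r : V) : Prop :=
  IsRet A r ∧ ∃ S, IsTNC A S ∧ ∀ p, A p r → p ∈ S

/-- `IR(C)`: reticulations all of whose parents lie in `C`. -/
def IRset (A : V → V → Prop) (C : Set V) : Set V :=
  {r | IsRet A r ∧ ∀ p, A p r → p ∈ C}

/-- `CR(C)`: reticulations with at least one parent in `C` and at least one parent outside `C`. -/
def CRset (A : V → V → Prop) (C : Set V) : Set V :=
  {r | IsRet A r ∧ (∃ p, A p r ∧ p ∈ C) ∧ (∃ p, A p r ∧ p ∉ C)}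

/-- `L_C`: the leaves of the network lying in `C` together with the children of the
inner reticulations below `C`. -/
def LCset (A : V → V → Prop) (C : Set V) : Set V :=
  {ℓ | ℓ ∈ C ∧ IsLeaf A ℓ} ∪ {x | ∃ r ∈ IRset A C, A r x}

/-- Bicombining: every reticulation node has indegree exactly 2. -/
def Bicombining (A : V → V → Prop) : Prop := ∀ r, IsRet A r → inDeg A r = 2

/-- Galled: every reticulation node `r` has an ancestor `u` admitting two
internal-node-disjoint directed paths from `u` to `r` in which every node other
than `r` is a tree node. -/
def Galled (A : V → V → Prop) : Prop :=
  ∀ r, IsRet A r → ∃ u, Relation.TransGen A u r ∧ ∃ p₁ p₂ : List V,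
    IsPath A u r p₁ ∧ IsPath A u r p₂ ∧ p₁ ≠ p₂ ∧
    (∀ x, x ∈ p₁ → x ∈ p₂ → x = u ∨ x = r) ∧
    (∀ x ∈ p₁, x ≠ r → IsTreeNode A x) ∧ (∀ x ∈ p₂, x ≠ r → IsTreeNode A x)

/-- Restriction of a digraph to a vertex subset. -/
def Restrict (A : V → V → Prop) (S : Set V) : V → V → Prop :=
  fun a b => a ∈ S ∧ b ∈ S ∧ A a b

/-- Descendants of `u` (including `u`); the vertex set of the subnetwork `D_N(u)`. -/
def Desc (A : V → V → Prop) (u : V) : Set V := {v | Relation.ReflTransGen A u v}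

/-- Binary network: the root has outdegree 2, leaves have degree 1, and every other
node has total degree 3. -/
def IsBinary (A : V → V → Prop) (ρ : V) : Prop :=
  outDeg A ρ = 2 ∧ ∀ v, v ≠ ρ →
    (inDeg A v = 1 ∧ outDeg A v = 0) ∨ (inDeg A v = 1 ∧ outDeg A v = 2) ∨
    (inDeg A v = 2 ∧ outDeg A v = 1)

/-- A phylogenetic tree: a network with no reticulation nodes. -/
def IsPhyloTree (A : W → W → Prop) (ρ : W) : Prop :=
  IsNetwork A ρ ∧ ∀ w, ¬ IsRet A w

/-- A node with indegree 1 and outdegree 1 (a suppressible node). -/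
def Deg11 (A : V → V → Prop) (v : V) : Prop := inDeg A v = 1 ∧ outDeg A v = 1

/-- There is a directed path from `a` to `b` (of length ≥ 1) all of whose internal
nodes are suppressible. -/
def SubdivPath (A : V → V → Prop) (a b : V) : Prop :=
  ∃ p : List V, IsPath A a b p ∧ 2 ≤ p.length ∧ ∀ z ∈ p, z ≠ a → z ≠ b → Deg11 A z

/-- `φ` witnesses that the digraph `A'` on the vertex set `S` is a subdivision of the
tree `AT` restricted to the vertex set `SW`: `φ` injectively maps the tree nodes onto
the non-suppressible nodes, edges of the tree correspond exactly to directed paths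
whose internal nodes are suppressible, and leaves are mapped according to the leaf
correspondence `θ` (same labels). -/
def SubdivWitness (A' : V → V → Prop) (S : Set V) (AT : W → W → Prop) (SW : Set W)
    (θ : W → V) (φ : W → V) : Prop :=
  Set.InjOn φ SW ∧ (∀ w ∈ SW, φ w ∈ S) ∧
  (∀ x ∈ S, ¬ Deg11 (Restrict A' S) x → ∃ w ∈ SW, φ w = x) ∧
  (∀ x ∈ SW, ∀ y ∈ SW, (Restrict AT SW x y ↔ SubdivPath (Restrict A' S) (φ x) (φ y))) ∧
  (∀ w ∈ SW, outDeg (Restrict AT SW) w = 0 → φ w = θ w)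

/-- The digraph `A'` on vertex set `S` is a subdivision of the tree `AT` on `SW`. -/
def IsSubdivisionOf (A' : V → V → Prop) (S : Set V) (AT : W → W → Prop) (SW : Set W)
    (θ : W → V) : Prop :=
  ∃ φ, SubdivWitness A' S AT SW θ φ

/-- `E`, `D`, `φ` witness that the subnetwork of `A` on vertex set `S` displays the
subtree of `AT` on vertex set `SW`: `E` is a set of reticulation edges of the
subnetwork containing all but one of the incoming edges of each reticulation node of
the subnetwork, `D` is a set of deleted nodes, and `φ` witnesses that the result is a
subdivision of the subtree. -/
def DisplayWitness (A : V → V → Prop) (S : Set V) (AT : W → W → Prop) (SW : Set W)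
    (θ : W → V) (E : Set (V × V)) (D : Set V) (φ : W → V) : Prop :=
  (∀ e ∈ E, Restrict A S e.1 e.2 ∧ 2 ≤ inDeg (Restrict A S) e.2) ∧
  (∀ r ∈ S, 2 ≤ inDeg (Restrict A S) r →
     ∃ p, Restrict A S p r ∧ (p, r) ∉ E ∧ ∀ q, Restrict A S q r → q ≠ p → (q, r) ∈ E) ∧
  SubdivWitness (fun a b => Restrict A S a b ∧ (a, b) ∉ E) (S \ D) AT SW θ φ

/-- The subnetwork of `A` on vertex set `S` displays the subtree of `AT` on `SW`. -/
def DisplaysOn (A : V → V → Prop) (S : Set V) (AT : W → W → Prop) (SW : Set W)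
    (θ : W → V) : Prop :=
  ∃ E D φ, DisplayWitness A S AT SW θ E D φ

/-- The leaves of the subnetwork of `A` induced on vertex set `S`. -/
def SubLeaves (A : V → V → Prop) (S : Set V) : Set V :=
  {v | v ∈ S ∧ outDeg (Restrict A S) v = 0}

/-- `B` is a soft cluster in the subnetwork of `A` on vertex set `S`: `B` is the
cluster of some node of some phylogenetic tree displayed by that subnetwork. -/
def SoftClusterOn (A : V → V → Prop) (S : Set V) (B : Set V) : Prop :=
  ∃ (W : Type) (AT : W → W → Prop) (ρT : W) (θ : W → V),
    IsPhyloTree AT ρT ∧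
    Set.BijOn θ {w | IsLeaf AT w} (SubLeaves A S) ∧
    DisplaysOn A S AT Set.univ θ ∧
    ∃ x : W, θ '' {w | IsLeaf AT w ∧ Relation.ReflTransGen AT x w} = B

/-- `B` is a soft cluster of the node `u` of `N`: there are `E` and `D` as in the
definition of display such that `u` is a node of `(N − E) − D` and the set of leaves
of `N` below `u` in `(N − E) − D` equals `B`. -/
def SoftClusterAt (A : V → V → Prop) (u : V) (B : Set V) : Prop :=
  ∃ (E : Set (V × V)) (D : Set V),
    (∀ e ∈ E, A e.1 e.2 ∧ 2 ≤ inDeg A e.2) ∧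
    (∀ r, 2 ≤ inDeg A r → ∃ p, A p r ∧ (p, r) ∉ E ∧ ∀ q, A q r → q ≠ p → (q, r) ∈ E) ∧
    (∃ (W : Type) (AT : W → W → Prop) (ρT : W) (θ : W → V),
      IsPhyloTree AT ρT ∧ Set.BijOn θ {w | IsLeaf AT w} {v | IsLeaf A v} ∧
      IsSubdivisionOf (fun a b => A a b ∧ (a, b) ∉ E) (Set.univ \ D) AT Set.univ θ) ∧
    u ∉ D ∧
    {ℓ | IsLeaf A ℓ ∧
      Relation.ReflTransGen (fun a b => A a b ∧ (a, b) ∉ E ∧ a ∉ D ∧ b ∉ D) u ℓ} = B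

/-- `w` is the lowest common ancestor of the set `X` in the (tree-like) digraph `A`. -/
def IsLCAIn (A : V → V → Prop) (X : Set V) (w : V) : Prop :=
  (∀ x ∈ X, Relation.ReflTransGen A w x) ∧
  ∀ w', (∀ x ∈ X, Relation.ReflTransGen A w' x) → Relation.ReflTransGen A w' w

end PhyloNet

namespace PhyloNet

section Aux

variable {V : Type} {W : Type} {A : V → V → Prop} {ρ : V}

/-- Everything in a chain is reachable from the head. -/
lemma chain'_head_reach :
    ∀ (p : List V) (a : V), p.Chain' A → p.head? = some a →
      ∀ x ∈ p, Relation.ReflTransGen A a x := by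
  intro p
  induction p with
  | nil => intro a _ hh x hx; simp at hh
  | cons x0 t ih =>
    intro a hc hh x hx
    simp only [List.head?_cons, Option.some.injEq] at hh
    subst hh
    rcases List.mem_cons.1 hx with rfl | hx
    · exact Relation.ReflTransGen.refl
    · cases t with
      | nil => simp at hx
      | cons x1 t' =>
        replace hc := List.isChain_cons_cons.1 hc
        exact (Relation.ReflTransGen.single hc.1).trans (ih x1 hc.2 rfl x hx)

/-- The last element of a chain is reachable from every member. -/
lemma chain'_reach_last :
    ∀ (p : List V) (b : V), p.Chain' A → p.getLast? = some b →
      ∀ x ∈ p, Relation.ReflTransGen A x b := by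
  intro p
  induction p with
  | nil => intro b _ _ x hx; simp at hx
  | cons x0 t ih =>
    intro b hc hl x hx
    cases t with
    | nil =>
      simp only [List.getLast?_singleton, Option.some.injEq] at hl
      rcases List.mem_cons.1 hx with rfl | hx
      · rw [← hl]
      · simp at hx
    | cons x1 t' =>
      rw [List.getLast?_cons_cons] at hl
      replace hc := List.isChain_cons_cons.1 hc
      rcases List.mem_cons.1 hx with rfl | hx
      · exact (Relation.ReflTransGen.single hc.1).trans
          (ih b hc.2 hl x1 List.mem_cons_self)
      · exact ih b hc.2 hl x hx

lemma isPath_reflTransGen {a b : V} {p : List V} (h : IsPath A a b p) :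
    Relation.ReflTransGen A a b :=
  chain'_head_reach p a h.1 h.2.1 b (List.mem_of_getLast? h.2.2)

lemma isPath_reach_from_mem {a b x : V} {p : List V} (h : IsPath A a b p) (hx : x ∈ p) :
    Relation.ReflTransGen A x b :=
  chain'_reach_last p b h.1 h.2.2 x hx

lemma isPath_reach_to_mem {a b x : V} {p : List V} (h : IsPath A a b p) (hx : x ∈ p) :
    Relation.ReflTransGen A a x :=
  chain'_head_reach p a h.1 h.2.1 x hx

lemma reflTransGen_isPath {a b : V} (h : Relation.ReflTransGen A a b) :
    ∃ p, IsPath A a b p := by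
  induction h with
  | refl => exact ⟨[a], List.isChain_singleton a, rfl, rfl⟩
  | @tail b' c h1 h2 ih =>
    obtain ⟨p, hp⟩ := ih
    refine ⟨p ++ [c], ?_, ?_, ?_⟩
    · refine List.isChain_append.2 ⟨hp.1, List.isChain_singleton c, ?_⟩
      intro x hx y hy
      rw [hp.2.2] at hx
      simp only [Option.mem_def, Option.some.injEq, List.head?_cons] at hx hy
      rw [← hx, ← hy]
      exact h2
    · rw [List.head?_append, hp.2.1]; rfl
    · exact List.getLast?_concat
  
/-- A chain of length ≥ 2 ending at `b` provides a predecessor of `b`. -/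
lemma chain'_exists_pred :
    ∀ (p : List V) (b : V), p.Chain' A → 2 ≤ p.length → p.getLast? = some b →
      ∃ a, A a b := by
  intro p
  induction p with
  | nil => intro b _ h2 _; simp at h2
  | cons x0 t ih =>
    intro b hc h2 hl
    cases t with
    | nil => simp at h2
    | cons x1 t' =>
      replace hc := List.isChain_cons_cons.1 hc
      rw [List.getLast?_cons_cons] at hl
      cases t' with
      | nil =>
        simp only [List.getLast?_singleton, Option.some.injEq] at hl
        rw [← hl]
        exact ⟨x0, hc.1⟩
      | cons x2 t'' =>
        exact ih b hc.2 (by simp) hl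

lemma ncard_one_elim {s : Set V} (h : s.ncard = 1) : ∃ a, a ∈ s ∧ ∀ y ∈ s, y = a := by
  obtain ⟨a, rfl⟩ := Set.ncard_eq_one.1 h
  exact ⟨a, rfl, fun y hy => hy⟩

lemma exists_ne_of_two_le_ncard [Finite V] {s : Set V} (h : 2 ≤ s.ncard) (x : V) :
    ∃ y ∈ s, y ≠ x := by
  by_contra hcon
  push_neg at hcon
  have hsub : s ⊆ {x} := fun y hy => hcon y hy
  have := Set.ncard_le_ncard hsub (Set.toFinite _)
  rw [Set.ncard_singleton] at this
  omega

lemma no_edge_to_root (hN : IsNetwork A ρ) {x : V} (h : A x ρ) : False := by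
  haveI := hN.finite
  have h0 := hN.root_indeg
  rw [inDeg, Set.ncard_eq_zero (Set.toFinite _)] at h0
  have hx : x ∈ ({u | A u ρ} : Set V) := h
  rw [h0] at hx
  exact hx

lemma ne_root_of_edge (hN : IsNetwork A ρ) {x y : V} (h : A x y) : y ≠ ρ :=
  fun he => no_edge_to_root hN (he ▸ h)

lemma tree_inDeg_one (hN : IsNetwork A ρ) (hbin : IsBinary A ρ) {v : V}
    (ht : IsTreeNode A v) (hv : v ≠ ρ) : inDeg A v = 1 := by
  rcases hbin.2 v hv with h | h | h
  · exact h.1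
  · exact h.1
  · exact absurd ⟨h.1.ge, h.2⟩ ht

lemma child_unique {r c : V} (hout : outDeg A r = 1) (hc : A r c) :
    ∀ x, A r x → x = c := by
  obtain ⟨c', _, hu⟩ := ncard_one_elim hout
  intro x hx
  rw [hu x hx, hu c hc]

lemma wf_transGen (hN : IsNetwork A ρ) : WellFounded (Relation.TransGen A) := by
  haveI := hN.finite
  haveI : IsTrans V (Relation.TransGen A) := ⟨fun _ _ _ h1 h2 => h1.trans h2⟩
  haveI : IsIrrefl V (Relation.TransGen A) := ⟨fun a h => hN.acyclic a h⟩
  exact Finite.wellFounded_of_trans_of_irrefl _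

/-- In a reticulation-visible network, the child of a reticulation is a tree node. -/
lemma ret_child_tree (hN : IsNetwork A ρ) (hRV : RetVisible A ρ) {r c : V}
    (hret : IsRet A r) (hrc : A r c) : IsTreeNode A c := by
  intro hcret
  haveI := hN.finite
  have hchild := child_unique hret.2 hrc
  obtain ⟨p', hp'c, hp'r⟩ := exists_ne_of_two_le_ncard (s := {q | A q c}) hcret.1 r
  obtain ⟨ℓ, hℓ, hvis⟩ := hRV r hret
  obtain ⟨P0, hP0⟩ := reflTransGen_isPath (hN.reach_from_root ℓ)
  have hrℓ : Relation.ReflTransGen A r ℓ := isPath_reach_from_mem hP0 (hvis P0 hP0)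
  have hrne : r ≠ ℓ := by
    intro he
    have h1 := hret.2
    rw [he, hℓ.2] at h1
    exact absurd h1 (by omega)
  have hcl : Relation.ReflTransGen A c ℓ := by
    rcases hrℓ.cases_head with he | ⟨x, hx, hxl⟩
    · exact absurd he hrne
    · rwa [hchild x hx] at hxl
  obtain ⟨P1, hP1⟩ := reflTransGen_isPath (hN.reach_from_root p')
  by_cases hr1 : r ∈ P1
  · have hrp' : Relation.ReflTransGen A r p' := isPath_reach_from_mem hP1 hr1
    have hcp' : Relation.ReflTransGen A c p' := by
      rcases hrp'.cases_head with he | ⟨x, hx, hxl⟩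
      · exact absurd he.symm hp'r
      · rwa [hchild x hx] at hxl
    exact hN.acyclic c (Relation.TransGen.tail' hcp' hp'c)
  · obtain ⟨P2, hP2⟩ := reflTransGen_isPath hcl
    by_cases hr2 : r ∈ P2
    · have hcr : Relation.ReflTransGen A c r := isPath_reach_to_mem hP2 hr2
      exact hN.acyclic c (Relation.TransGen.tail' hcr hrc)
    · have hcomb : IsPath A ρ ℓ (P1 ++ P2) := by
        refine ⟨List.isChain_append.2 ⟨hP1.1, hP2.1, ?_⟩, ?_, ?_⟩
        · intro x hx y hy
          rw [hP1.2.2] at hx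
          rw [hP2.2.1] at hy
          simp only [Option.mem_def, Option.some.injEq] at hx hy
          rw [← hx, ← hy]
          exact hp'c
        · rw [List.head?_append, hP1.2.1]; rfl
        · rw [List.getLast?_append, hP2.2.2]; rfl
      rcases List.mem_append.1 (hvis _ hcomb) with h | h
      · exact hr1 h
      · exact hr2 h

/-- Climbing up in the pruned, restricted graph from any surviving node reaches
the image of some tree node. -/
lemma exists_phi_above (hN : IsNetwork A ρ) {E : Set (V × V)} {D : Set V}
    {AT : W → W → Prop} {θ φ : W → V}
    (hw : SubdivWitness (fun a b => A a b ∧ (a, b) ∉ E) (Set.univ \ D) AT Set.univ θ φ) :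
    ∀ s, s ∉ D → ∃ w : W, Relation.ReflTransGen
      (Restrict (fun a b => A a b ∧ (a, b) ∉ E) (Set.univ \ D)) (φ w) s := by
  refine fun s => (wf_transGen hN).induction
    (C := fun s => s ∉ D → ∃ w : W, Relation.ReflTransGen
      (Restrict (fun a b => A a b ∧ (a, b) ∉ E) (Set.univ \ D)) (φ w) s) s ?_
  intro x ih hx
  by_cases hd : Deg11 (Restrict (fun a b => A a b ∧ (a, b) ∉ E) (Set.univ \ D)) x
  · obtain ⟨q, hq, _⟩ := ncard_one_elim hd.1
    obtain ⟨w, hw'⟩ := ih q (Relation.TransGen.single hq.2.2.1) hq.1.2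
    exact ⟨w, hw'.tail hq⟩
  · obtain ⟨w, _, hww⟩ := hw.2.2.1 x ⟨trivial, hx⟩ hd
    exact ⟨w, by rw [hww]⟩

/-- Reachability in the tree transfers to the subdivision. -/
lemma subdiv_reach {A' : V → V → Prop} {S : Set V} {AT : W → W → Prop} {θ φ : W → V}
    (hw : SubdivWitness A' S AT Set.univ θ φ) {w w' : W}
    (h : Relation.ReflTransGen AT w w') :
    Relation.ReflTransGen (Restrict A' S) (φ w) (φ w') := by
  induction h with
  | refl => exact Relation.ReflTransGen.refl
  | tail h1 h2 ih =>
    obtain ⟨p, hp, _, _⟩ := (hw.2.2.2.1 _ trivial _ trivial).1 ⟨trivial, trivial, h2⟩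
    exact ih.trans (isPath_reflTransGen hp)

/-- The image of the root of the displayed tree cannot be strictly below a
surviving node. -/
lemma phi_root_not_below (hN : IsNetwork A ρ) {E : Set (V × V)} {D : Set V}
    {AT : W → W → Prop} {ρT : W} {θ φ : W → V}
    (hTree : IsPhyloTree AT ρT)
    (hw : SubdivWitness (fun a b => A a b ∧ (a, b) ∉ E) (Set.univ \ D) AT Set.univ θ φ)
    {u z : V} (huD : u ∉ D) (hz : φ ρT = z) (h : Relation.TransGen A u z) : False := by
  obtain ⟨w, hwu⟩ := exists_phi_above hN hw u huD
  have h1 := subdiv_reach hw (hTree.1.reach_from_root w)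
  rw [hz] at h1
  have h2 : Relation.ReflTransGen A z u :=
    Relation.ReflTransGen.mono (p := A) (fun a b (hab : Restrict _ _ a b) => hab.2.2.1) _ _ (h1.trans hwu)
  exact hN.acyclic u (h.trans_left h2)

/-- If a surviving node strictly below `u` has a unique available parent, that
parent also survives. -/
lemma parent_not_deleted (hN : IsNetwork A ρ) {E : Set (V × V)} {D : Set V}
    {AT : W → W → Prop} {ρT : W} {θ φ : W → V}
    (hTree : IsPhyloTree AT ρT)
    (hw : SubdivWitness (fun a b => A a b ∧ (a, b) ∉ E) (Set.univ \ D) AT Set.univ θ φ)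
    {u z p : V} (huD : u ∉ D) (hzD : z ∉ D) (huz : Relation.TransGen A u z)
    (hpz : A p z) (hpE : (p, z) ∉ E)
    (huniq : ∀ q, A q z → (q, z) ∉ E → q = p) : p ∉ D := by
  intro hpD
  have hempty : {q | Restrict (fun a b => A a b ∧ (a, b) ∉ E) (Set.univ \ D) q z} = ∅ := by
    ext q
    simp only [Set.mem_setOf_eq, Set.mem_empty_iff_false, iff_false]
    rintro ⟨hq1, _, hq3, hq4⟩
    have heq := huniq q hq3 hq4
    subst heq
    exact hq1.2 hpD
  have hnd : ¬ Deg11 (Restrict (fun a b => A a b ∧ (a, b) ∉ E) (Set.univ \ D)) z := by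
    intro hd
    have h0 : inDeg (Restrict (fun a b => A a b ∧ (a, b) ∉ E) (Set.univ \ D)) z = 0 := by
      unfold inDeg
      rw [hempty]
      exact Set.ncard_empty _
    rw [hd.1] at h0
    exact absurd h0 (by omega)
  obtain ⟨w, _, hww⟩ := hw.2.2.1 z ⟨trivial, hzD⟩ hnd
  by_cases hwρ : w = ρT
  · exact phi_root_not_below hN hTree hw huD (hwρ ▸ hww) huz
  · have hin1 : inDeg AT w = 1 := by
      rcases hTree.1.degree_cond w hwρ with h | h
      · exact h.1
      · exact absurd ⟨h.1, h.2⟩ (hTree.2 w)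
    obtain ⟨w₀, hw₀, _⟩ := ncard_one_elim hin1
    obtain ⟨pl, hpl, hlen, _⟩ := (hw.2.2.2.1 w₀ trivial w trivial).1 ⟨trivial, trivial, hw₀⟩
    obtain ⟨q, hq⟩ := chain'_exists_pred pl _ hpl.1 hlen hpl.2.2
    rw [hww] at hq
    have hmem : q ∈ ({q | Restrict (fun a b => A a b ∧ (a, b) ∉ E) (Set.univ \ D) q z} : Set V) := hq
    rw [hempty] at hmem
    exact hmem

/-- Every node of a tree node component is a tree node. -/
lemma tnc_mem_tree {C : Set V} (h : IsTNC A C) : ∀ v ∈ C, IsTreeNode A v := by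
  obtain ⟨u₀, hu₀, rfl⟩ := h
  intro v hv
  rcases Relation.ReflTransGen.cases_tail hv with he | ⟨c, _, hc⟩
  · rw [he]; exact hu₀
  · exact hc.2.1

lemma tnc_closed {C : Set V} (h : IsTNC A C) {x q : V} (hx : x ∈ C)
    (hq : IsTreeNode A q) (hA : A q x) : q ∈ C := by
  have hxt := tnc_mem_tree h x hx
  obtain ⟨u₀, hu₀, rfl⟩ := h
  exact hx.tail ⟨hxt, hq, Or.inr hA⟩

lemma exists_comp_root (hN : IsNetwork A ρ) {C : Set V} (h : IsTNC A C) :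
    ∀ x ∈ C, ∃ g, CompRoot A C g ∧ Relation.ReflTransGen A g x := by
  refine fun x => (wf_transGen hN).induction
    (C := fun x => x ∈ C → ∃ g, CompRoot A C g ∧ Relation.ReflTransGen A g x) x ?_
  intro y ih hy
  by_cases hpar : ∃ q, IsTreeNode A q ∧ A q y
  · obtain ⟨q, hqt, hqA⟩ := hpar
    obtain ⟨g, hg, hgr⟩ := ih q (Relation.TransGen.single hqA) (tnc_closed h hy hqt hqA)
    exact ⟨g, hg, hgr.tail hqA⟩
  · exact ⟨y, ⟨hy, fun q hq hA => hpar ⟨q, hq, hA⟩⟩, Relation.ReflTransGen.refl⟩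

/-- The child of an inner reticulation of a lowest big tree node component is a leaf. -/
lemma ir_child_leaf (hN : IsNetwork A ρ) (hbin : IsBinary A ρ) (hRV : RetVisible A ρ)
    {C : Set V} (hC : LowestBig A C) {r c : V} (hr : r ∈ IRset A C) (hrc : A r c) :
    IsLeaf A c := by
  have hret : IsRet A r := hr.1
  have hct : IsTreeNode A c := ret_child_tree hN hRV hret hrc
  have hC' : IsTNC A {v | Relation.ReflTransGen (TAdj A) c v} := ⟨c, hct, rfl⟩
  have hcρ : c ≠ ρ := ne_root_of_edge hN hrc
  have hcin : inDeg A c = 1 := tree_inDeg_one hN hbin hct hcρ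
  have hcr' : CompRoot A {v | Relation.ReflTransGen (TAdj A) c v} c := by
    refine ⟨Relation.ReflTransGen.refl, ?_⟩
    intro q hq hA
    obtain ⟨p0, hp0, hup⟩ := ncard_one_elim hcin
    have h1 := hup q hA
    have h2 := hup r hrc
    rw [h1, ← h2] at hq
    exact hq hret
  have h2p : 2 ≤ ({q | A q r} : Set V).ncard := hret.1
  obtain ⟨p₀, hp₀⟩ := Set.nonempty_of_ncard_ne_zero
    (by omega : ({q | A q r} : Set V).ncard ≠ 0)
  have hp₀C : p₀ ∈ C := hr.2 p₀ hp₀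
  obtain ⟨g, hg, hgp⟩ := exists_comp_root hN hC.1.1 p₀ hp₀C
  have htg : Relation.TransGen A g c := (Relation.TransGen.tail' hgp hp₀).tail hrc
  obtain ⟨ℓ', hℓ', heq⟩ := hC.2 _ c g hC' hcr' hg htg
  have hcmem : c ∈ {v | Relation.ReflTransGen (TAdj A) c v} := Relation.ReflTransGen.refl
  rw [heq, Set.mem_singleton_iff] at hcmem
  rwa [hcmem]

/-- A leaf of the network is never deleted in a display witness. -/
lemma leaf_not_deleted {E : Set (V × V)} {D : Set V} {AT : W → W → Prop} {θ φ : W → V}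
    (hw : SubdivWitness (fun a b => A a b ∧ (a, b) ∉ E) (Set.univ \ D) AT Set.univ θ φ)
    (hBij : Set.BijOn θ {w | IsLeaf AT w} {v | IsLeaf A v})
    {v : V} (hv : IsLeaf A v) : v ∉ D := by
  obtain ⟨w, hwleaf, hθ⟩ := hBij.surjOn hv
  have hout : outDeg (Restrict AT Set.univ) w = 0 := by
    have hs : {b | Restrict AT Set.univ w b} = {b | AT w b} := by
      ext b; simp [Restrict]
    unfold outDeg
    rw [hs]
    exact hwleaf.2
  have hφw := hw.2.2.2.2 w trivial hout
  have hmem := hw.2.1 w trivial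
  rw [hφw, hθ] at hmem
  exact hmem.2

/-- Main climbing lemma: along a directed path inside a (binary) tree node
component from a surviving node `u` down to a surviving node `t`, all nodes
survive and the path survives in the pruned graph. -/
lemma reach_in_pruned (hN : IsNetwork A ρ) (hbin : IsBinary A ρ) {C : Set V}
    (hCtree : ∀ v ∈ C, IsTreeNode A v)
    {E : Set (V × V)} {D : Set V}
    (hE : ∀ e ∈ E, A e.1 e.2 ∧ 2 ≤ inDeg A e.2)
    {AT : W → W → Prop} {ρT : W} {θ φ : W → V}
    (hTree : IsPhyloTree AT ρT)
    (hw : SubdivWitness (fun a b => A a b ∧ (a, b) ∉ E) (Set.univ \ D) AT Set.univ θ φ)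
    {u t : V} (huD : u ∉ D) (htD : t ∉ D)
    (h : Relation.ReflTransGen (Restrict A C) u t) :
    Relation.ReflTransGen (fun a b => A a b ∧ (a, b) ∉ E ∧ a ∉ D ∧ b ∉ D) u t := by
  suffices H : ∀ x, Relation.ReflTransGen (Restrict A C) x t →
      (Relation.ReflTransGen (Restrict A C) u x → x ∉ D ∧
      Relation.ReflTransGen (fun a b => A a b ∧ (a, b) ∉ E ∧ a ∉ D ∧ b ∉ D) x t) by
    exact (H u h Relation.ReflTransGen.refl).2
  intro x hxt
  induction hxt using Relation.ReflTransGen.head_induction_on with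
  | refl => exact fun _ => ⟨htD, Relation.ReflTransGen.refl⟩
  | head hstep htail ih =>
    rename_i a c2
    intro hua
    obtain ⟨hcD, hct⟩ := ih (hua.tail hstep)
    have hcC : c2 ∈ C := hstep.2.1
    have hac : A a c2 := hstep.2.2
    have hcρ : c2 ≠ ρ := ne_root_of_edge hN hac
    have hin1 : inDeg A c2 = 1 := tree_inDeg_one hN hbin (hCtree _ hcC) hcρ
    have huniq : ∀ q, A q c2 → (q, c2) ∉ E → q = a := by
      obtain ⟨p0, hp0, hup⟩ := ncard_one_elim hin1
      intro q hq _
      rw [hup q hq, hup a hac]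
    have hEac : (a, c2) ∉ E := by
      intro hmem
      have h2 : 2 ≤ inDeg A c2 := (hE _ hmem).2
      omega
    have huAc : Relation.TransGen A u c2 :=
      Relation.TransGen.tail' (Relation.ReflTransGen.mono (p := A) (fun a b (hab : Restrict A C a b) => hab.2.2) _ _ hua) hac
    have haD : a ∉ D := parent_not_deleted hN hTree hw huD hcD huAc hac hEac huniq
    exact ⟨haD, hct.head ⟨hac, hEac, haD, hcD⟩⟩

end Aux

/-- Let `N` be a binary reticulation-visible network, `B ⊆ L(N)`, `C` a lowest big tree
node component with root `rC`.
(i) If `ℓ` is a leaf of `N` in `C` with `ℓ ∉ B`, then `B` is not a soft cluster of any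
node on the directed path in `C` from `rC` to `ℓ`.
(ii) For every `r ∈ IR(C)` with `c(r) ∉ B`, `B` is not a soft cluster of any node on
the directed path in `C` from `rC` to the lowest common ancestor in `C` of the
parents of `r` (both endpoints included). -/
theorem soft_cluster_excluded_on_paths {V : Type} (A : V → V → Prop) (ρ : V)
    (hN : IsNetwork A ρ) (hbin : IsBinary A ρ) (hRV : RetVisible A ρ)
    (B : Set V) (hB : B ⊆ {v | IsLeaf A v})
    (C : Set V) (rC : V) (hC : LowestBig A C) (hrC : CompRoot A C rC) :
    (∀ ℓ, IsLeaf A ℓ → ℓ ∈ C → ℓ ∉ B →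
      ∀ u, Relation.ReflTransGen (Restrict A C) rC u →
        Relation.ReflTransGen (Restrict A C) u ℓ → ¬ SoftClusterAt A u B) ∧
    (∀ r ∈ IRset A C, (∀ x, A r x → x ∉ B) →
      ∀ w, IsLCAIn (Restrict A C) {p | A p r} w →
        ∀ u, Relation.ReflTransGen (Restrict A C) rC u →
          Relation.ReflTransGen (Restrict A C) u w → ¬ SoftClusterAt A u B) := by
  haveI := hN.finite
  have hCtree : ∀ v ∈ C, IsTreeNode A v := tnc_mem_tree hC.1.1
  constructor
  · -- Part (i)
    intro ℓ hℓ hℓC hℓB u _ huℓ hSC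
    obtain ⟨E, D, hE, hkeep, ⟨W, AT, ρT, θ, hTree, hBij, hsub⟩, huD, hBeq⟩ := hSC
    obtain ⟨φ, hφ⟩ := hsub
    have hℓD : ℓ ∉ D := leaf_not_deleted hφ hBij hℓ
    have hreach := reach_in_pruned hN hbin hCtree hE hTree hφ huD hℓD huℓ
    exact hℓB (hBeq ▸ ⟨hℓ, hreach⟩)
  · -- Part (ii)
    intro r hr hrB w hlca u _ huw hSC
    have hret : IsRet A r := hr.1
    obtain ⟨c, hrcmem, _⟩ := ncard_one_elim hret.2
    have hrc : A r c := hrcmem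
    have hcleaf := ir_child_leaf hN hbin hRV hC hr hrc
    have hcB := hrB c hrc
    obtain ⟨E, D, hE, hkeep, ⟨W, AT, ρT, θ, hTree, hBij, hsub⟩, huD, hBeq⟩ := hSC
    obtain ⟨φ, hφ⟩ := hsub
    have hcD : c ∉ D := leaf_not_deleted hφ hBij hcleaf
    have h2p : 2 ≤ ({q | A q r} : Set V).ncard := hret.1
    obtain ⟨p₀, hp₀⟩ := Set.nonempty_of_ncard_ne_zero
      (by omega : ({q | A q r} : Set V).ncard ≠ 0)
    have hwp₀ : Relation.ReflTransGen (Restrict A C) w p₀ := hlca.1 p₀ hp₀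
    have huAr : Relation.TransGen A u r :=
      Relation.TransGen.tail' (Relation.ReflTransGen.mono (p := A) (fun a b (hab : Restrict A C a b) => hab.2.2) _ _ (huw.trans hwp₀)) hp₀
    have huAc : Relation.TransGen A u c := huAr.tail hrc
    have hcinuniq : ∀ q, A q c → (q, c) ∉ E → q = r := by
      obtain ⟨p1, hp1, hup⟩ := ncard_one_elim hcleaf.1
      intro q hq _
      rw [hup q hq, hup r hrc]
    have hrcE : (r, c) ∉ E := by
      intro hmem
      have h2 : 2 ≤ inDeg A c := (hE _ hmem).2
      have h1 : inDeg A c = 1 := hcleaf.1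
      omega
    have hrD : r ∉ D := parent_not_deleted hN hTree hφ huD hcD huAc hrc hrcE hcinuniq
    obtain ⟨ps, hpsA, hpsE, hpsuniq⟩ := hkeep r hret.1
    have hpsuniq' : ∀ q, A q r → (q, r) ∉ E → q = ps := by
      intro q hq hqe
      by_contra hne
      exact hqe (hpsuniq q hq hne)
    have hpsD : ps ∉ D := parent_not_deleted hN hTree hφ huD hrD huAr hpsA hpsE hpsuniq'
    have hups : Relation.ReflTransGen (Restrict A C) u ps := huw.trans (hlca.1 ps hpsA)
    have hreach := reach_in_pruned hN hbin hCtree hE hTree hφ huD hpsD hups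
    have hfull := (hreach.tail ⟨hpsA, hpsE, hpsD, hrD⟩).tail ⟨hrc, hrcE, hrD, hcD⟩
    exact hcB (hBeq ▸ ⟨hcleaf, hfull⟩)

end PhyloNet
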